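/- If ω has law P and P̃ is the exponentially tilted law dP̃/dP = exp(-λ Σ_{i=1}^N ω_i)/M(-λ)^N with λ = δ/√N, then there exists C > 1 (depending only on the law of ω_1) such that for a ∈ (0,1) and δ ∈ (0, a/C): P̃(dP/dP̃ < e^{-a}) ≤ C (δ/a)^2. -/

import Mathlib

set_option maxHeartbeats 2000000
open MeasureTheory ProbabilityTheory Filter

lemma stmt19_exp_sub_one_le (y : ℝ) : Real.exp y - 1 ≤ y * Real.exp y := by
  have h := Real.add_one_le_exp (-y)
  have hy := Real.exp_pos y
  have : (1 - y) * Real.exp y ≤ Real.exp (-y) * Real.exp y := by nlinarith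
  rw [← Real.exp_add, neg_add_cancel, Real.exp_zero] at this
  nlinarith

lemma stmt19_abs_exp_sub_one (y : ℝ) : |Real.exp y - 1| ≤ |y| * Real.exp |y| := by
  rcases le_or_gt 0 y with hy | hy
  · rw [abs_of_nonneg hy, abs_of_nonneg (by nlinarith [Real.add_one_le_exp y] : (0:ℝ) ≤ Real.exp y - 1)]
    exact stmt19_exp_sub_one_le y
  · rw [abs_of_neg hy, abs_of_nonpos (by nlinarith [Real.exp_le_exp.2 hy.le, Real.exp_zero] : Real.exp y - 1 ≤ 0)]
    have := Real.add_one_le_exp y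
    have h2 : (1:ℝ) ≤ Real.exp (-y) := by
      rw [← Real.exp_zero]; exact Real.exp_le_exp.2 (by linarith)
    nlinarith

lemma stmt19_exp_taylor2 (y : ℝ) : Real.exp y - 1 - y ≤ y^2 * Real.exp |y| := by
  rcases le_or_gt 0 y with hy | hy
  · rw [abs_of_nonneg hy]
    have h1 := stmt19_exp_sub_one_le y
    have h2 := Real.add_one_le_exp y
    nlinarith
  · rw [abs_of_neg hy]
    have h1 := Real.add_one_le_exp y
    have h2 : Real.exp y * (1 - y) ≤ 1 := by
      have := Real.add_one_le_exp (-y)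
      have hp := Real.exp_pos y
      calc Real.exp y * (1 - y) ≤ Real.exp y * Real.exp (-y) := by nlinarith
        _ = 1 := by rw [← Real.exp_add, add_neg_cancel, Real.exp_zero]
    have h3 : (1:ℝ) ≤ Real.exp (-y) := by
      rw [← Real.exp_zero]; exact Real.exp_le_exp.2 (by linarith)
    nlinarith [Real.exp_pos y]

lemma stmt19_indep_prod {Ω : Type*} [MeasurableSpace Ω] {μ : Measure Ω} [IsProbabilityMeasure μ]
    {Y : ℕ → Ω → ℝ} (hY : iIndepFun Y μ)
    (hYm : ∀ i, Measurable (Y i)) (hYi : ∀ i, Integrable (Y i) μ) (s : Finset ℕ) :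
    Integrable (fun x => ∏ i ∈ s, Y i x) μ ∧
      ∫ x, ∏ i ∈ s, Y i x ∂μ = ∏ i ∈ s, ∫ x, Y i x ∂μ := by
  classical
  induction s using Finset.induction_on with
  | empty => simp
  | @insert a s ha ih =>
    have hindep : IndepFun (∏ j ∈ s, Y j) (Y a) μ :=
      hY.indepFun_finsetProd_of_notMem hYm ha
    have hps : (∏ j ∈ s, Y j) = fun x => ∏ j ∈ s, Y j x := by
      funext x; simp [Finset.prod_apply]
    rw [hps] at hindep
    have hint : Integrable ((fun x => ∏ j ∈ s, Y j x) * Y a) μ :=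
      hindep.integrable_mul ih.1 (hYi a)
    have heq := hindep.integral_mul_eq_mul_integral ih.1.aestronglyMeasurable (hYi a).aestronglyMeasurable
    have h1 : (fun x => ∏ i ∈ insert a s, Y i x) = (fun x => ∏ j ∈ s, Y j x) * Y a := by
      funext x; simp [Finset.prod_insert ha, Pi.mul_apply, mul_comm]
    refine ⟨h1 ▸ hint, ?_⟩
    rw [h1, heq, ih.2, Finset.prod_insert ha, mul_comm]

theorem stmt19 {Ω : Type*} [MeasurableSpace Ω] (μ : Measure Ω) [IsProbabilityMeasure μ]
    (ω : ℕ → Ω → ℝ) (hmeas : ∀ i, Measurable (ω i))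
    (hindep : iIndepFun ω μ)
    (hident : ∀ i, IdentDistrib (ω i) (ω 0) μ μ)
    (hcent : ∫ x, ω 0 x ∂μ = 0)
    (hvar : ∫ x, (ω 0 x) ^ 2 ∂μ = 1)
    (M : ℝ → ℝ) (hM : ∀ t, M t = ∫ x, Real.exp (t * ω 0 x) ∂μ)
    (hint : ∀ t : ℝ, Integrable (fun x => Real.exp (t * ω 0 x)) μ) :
    ∃ C : ℝ, 1 < C ∧ ∀ a ∈ Set.Ioo (0 : ℝ) 1, ∀ δ ∈ Set.Ioo (0 : ℝ) (a / C),
      ∀ N : ℕ, 0 < N →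
      (μ.withDensity (fun x => ENNReal.ofReal
          (Real.exp (-(δ / Real.sqrt N) * ∑ i ∈ Finset.range N, ω i x) /
            M (-(δ / Real.sqrt N)) ^ N)))
        {x | Real.exp ((δ / Real.sqrt N) * ∑ i ∈ Finset.range N, ω i x) *
              M (-(δ / Real.sqrt N)) ^ N < Real.exp (-a)} ≤
      ENNReal.ofReal (C * (δ / a) ^ 2) := by
  classical
  -- dominating function and its integral
  set D : Ω → ℝ := fun x => Real.exp (3 * ω 0 x) + Real.exp (-3 * ω 0 x) + 2 with hD_def
  have hDint : Integrable D μ := ((hint 3).add (hint (-3))).add (integrable_const 2)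
  have hDnn : ∀ x, 0 ≤ D x := fun x => by positivity
  set B : ℝ := ∫ x, D x ∂μ with hB_def
  have hBnn : 0 ≤ B := integral_nonneg hDnn
  set C : ℝ := 8 * B ^ 3 + 10 * B + 2 with hC_def
  have hC1 : 1 < C := by nlinarith [pow_nonneg hBnn 3]
  have hC0 : 0 < C := by linarith
  refine ⟨C, hC1, ?_⟩
  rintro a ⟨ha0, ha1⟩ δ ⟨hδ0, hδa⟩ N hN
  -- basic facts about lam
  set lam : ℝ := δ / Real.sqrt N with hlam_def
  have hNpos : (0:ℝ) < N := by exact_mod_cast hN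
  have hsqrtN : (1:ℝ) ≤ Real.sqrt N := by
    rw [show (1:ℝ) = Real.sqrt 1 by simp]
    exact Real.sqrt_le_sqrt (by exact_mod_cast hN)
  have hδ1 : δ < 1 := by
    have : a / C < 1 := by rw [div_lt_one hC0]; linarith
    linarith
  have hlam0 : 0 < lam := div_pos hδ0 (by linarith)
  have hlam1 : lam ≤ 1 := by
    have : lam ≤ δ := div_le_self hδ0.le hsqrtN
    linarith
  have hlamN : lam ^ 2 * N = δ ^ 2 := by
    rw [hlam_def, div_pow, Real.sq_sqrt hNpos.le]
    field_simp
  -- pointwise exponential domination facts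
  have habs : ∀ u : ℝ, |u| ≤ Real.exp |u| := fun u => by
    nlinarith [Real.add_one_le_exp |u|]
  have hexp3 : ∀ x, Real.exp |ω 0 x| ^ 3 ≤ D x := by
    intro x
    have h1 : Real.exp (3 * |ω 0 x|) ≤ Real.exp (3 * ω 0 x) + Real.exp (-3 * ω 0 x) := by
      rcases abs_cases (ω 0 x) with ⟨h, _⟩ | ⟨h, _⟩
      · rw [h]; nlinarith [Real.exp_pos (-3 * ω 0 x)]
      · rw [h]
        have : (3:ℝ) * -ω 0 x = -3 * ω 0 x := by ring
        rw [this]; nlinarith [Real.exp_pos (3 * ω 0 x)]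
    have h2 : Real.exp (3 * |ω 0 x|) = Real.exp |ω 0 x| ^ 3 := by
      rw [show (3:ℝ) * |ω 0 x| = ((3:ℕ):ℝ) * |ω 0 x| by norm_num, Real.exp_nat_mul]
    rw [← h2]
    simp only [hD_def]
    linarith
  have hE1 : ∀ u : ℝ, (1:ℝ) ≤ Real.exp |u| := fun u => Real.one_le_exp (abs_nonneg u)
  have h_e_le : ∀ u : ℝ, Real.exp (-lam * u) ≤ Real.exp |u| := by
    intro u
    apply Real.exp_le_exp.2
    nlinarith [neg_abs_le u, abs_nonneg u, le_abs_self u]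
  -- per-coordinate integrability
  have hMlam : M (-lam) = ∫ x, Real.exp (-lam * ω 0 x) ∂μ := hM (-lam)
  have hi_e : Integrable (fun x => Real.exp (-lam * ω 0 x)) μ := hint (-lam)
  have hE1cube : ∀ u : ℝ, Real.exp |u| ≤ Real.exp |u| ^ 3 := by
    intro u
    have h1 := hE1 u; have hp := Real.exp_pos |u|
    nlinarith [mul_nonneg (mul_nonneg hp.le (sub_nonneg.2 h1)) (by linarith : (0:ℝ) ≤ Real.exp |u| + 1)]
  have hE2cube : ∀ u : ℝ, Real.exp |u| ^ 2 ≤ Real.exp |u| ^ 3 := by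
    intro u
    have h1 := hE1 u; have hp := Real.exp_pos |u|
    nlinarith [mul_nonneg (mul_nonneg hp.le hp.le) (sub_nonneg.2 h1)]
  have hiω : Integrable (ω 0) μ := by
    refine hDint.mono' (hmeas 0).aestronglyMeasurable (Filter.Eventually.of_forall fun x => ?_)
    simp only [Real.norm_eq_abs]
    have h1 := habs (ω 0 x); have h2 := hE1cube (ω 0 x); have h3 := hexp3 x
    linarith
  have hi_ue : Integrable (fun x => ω 0 x * Real.exp (-lam * ω 0 x)) μ := by
    refine hDint.mono' ((hmeas 0).mul (((hmeas 0).const_mul (-lam)).exp)).aestronglyMeasurable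
      (Filter.Eventually.of_forall fun x => ?_)
    simp only [Real.norm_eq_abs, abs_mul, Real.abs_exp]
    have h1 := habs (ω 0 x); have h2 := hE1 (ω 0 x); have h3 := hexp3 x
    have h4 := h_e_le (ω 0 x); have h5 := Real.exp_pos |ω 0 x|
    have h6 := abs_nonneg (ω 0 x)
    calc |ω 0 x| * Real.exp (-lam * ω 0 x)
        ≤ Real.exp |ω 0 x| * Real.exp |ω 0 x| := mul_le_mul h1 h4 (Real.exp_pos _).le h5.le
      _ = Real.exp |ω 0 x| ^ 2 := by ring
      _ ≤ Real.exp |ω 0 x| ^ 3 := hE2cube _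
      _ ≤ D x := h3
  have hi_u2e : Integrable (fun x => ω 0 x ^ 2 * Real.exp (-lam * ω 0 x)) μ := by
    refine hDint.mono' ((((hmeas 0).pow_const 2)).mul (((hmeas 0).const_mul (-lam)).exp)).aestronglyMeasurable
      (Filter.Eventually.of_forall fun x => ?_)
    simp only [Real.norm_eq_abs, abs_mul, Real.abs_exp, abs_pow, sq_abs]
    have h1 := habs (ω 0 x); have h2 := hE1 (ω 0 x); have h3 := hexp3 x
    have h4 := h_e_le (ω 0 x); have h5 := Real.exp_pos |ω 0 x|
    have h6 := abs_nonneg (ω 0 x)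
    calc ω 0 x ^ 2 * Real.exp (-lam * ω 0 x)
        = |ω 0 x| ^ 2 * Real.exp (-lam * ω 0 x) := by rw [sq_abs]
      _ ≤ Real.exp |ω 0 x| ^ 2 * Real.exp |ω 0 x| := by
          apply mul_le_mul _ h4 (Real.exp_pos _).le (by positivity)
          nlinarith
      _ = Real.exp |ω 0 x| ^ 3 := by ring
      _ ≤ D x := h3
  -- M(-lam) ≥ 1
  have hM1 : 1 ≤ M (-lam) := by
    rw [hMlam]
    have hmono : ∫ x, (-lam * ω 0 x + 1) ∂μ ≤ ∫ x, Real.exp (-lam * ω 0 x) ∂μ :=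
      integral_mono ((hiω.const_mul (-lam)).add (integrable_const 1)) hi_e
        (fun x => Real.add_one_le_exp _)
    rw [integral_add (hiω.const_mul (-lam)) (integrable_const 1), integral_const_mul, hcent] at hmono
    simpa using hmono
  have hMpos : 0 < M (-lam) := lt_of_lt_of_le one_pos hM1
  have hMne : M (-lam) ≠ 0 := hMpos.ne'
  -- |m1| ≤ lam * B
  set m1 : ℝ := ∫ x, ω 0 x * Real.exp (-lam * ω 0 x) ∂μ with hm1_def
  have hi_sub : Integrable (fun x => ω 0 x * (Real.exp (-lam * ω 0 x) - 1)) μ := by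
    refine (hi_ue.sub hiω).congr (Filter.Eventually.of_forall fun x => ?_)
    simp only [Pi.sub_apply]; ring
  have hm1B : |m1| ≤ lam * B := by
    have key : m1 = ∫ x, ω 0 x * (Real.exp (-lam * ω 0 x) - 1) ∂μ := by
      rw [show (fun x => ω 0 x * (Real.exp (-lam * ω 0 x) - 1))
          = fun x => ω 0 x * Real.exp (-lam * ω 0 x) - ω 0 x from funext fun x => by ring,
        integral_sub hi_ue hiω, hcent, sub_zero]
    rw [key]
    have habsint := norm_integral_le_integral_norm (μ := μ)
      (fun x => ω 0 x * (Real.exp (-lam * ω 0 x) - 1))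
    simp only [Real.norm_eq_abs] at habsint
    refine le_trans habsint ?_
    rw [show lam * B = ∫ x, lam * D x ∂μ by rw [integral_const_mul]]
    refine integral_mono hi_sub.abs (hDint.const_mul lam) fun x => ?_
    set u := ω 0 x with hu
    have h1 : |u * (Real.exp (-lam * u) - 1)| = |u| * |Real.exp (-lam * u) - 1| := abs_mul _ _
    have h2 := stmt19_abs_exp_sub_one (-lam * u)
    have h3 : |(-lam) * u| = lam * |u| := by
      rw [abs_mul, abs_neg, abs_of_pos hlam0]
    have h4 : Real.exp |(-lam) * u| ≤ Real.exp |u| := by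
      apply Real.exp_le_exp.2; rw [h3]; nlinarith [abs_nonneg u]
    have h5 := habs u
    have h6 := hexp3 x
    have h7 := Real.exp_pos |u|
    have h8 := abs_nonneg u
    have h9 : |Real.exp (-lam * u) - 1| ≤ lam * |u| * Real.exp |u| := by
      calc |Real.exp (-lam * u) - 1| ≤ |(-lam) * u| * Real.exp |(-lam) * u| := h2
        _ ≤ |(-lam) * u| * Real.exp |u| := by
            apply mul_le_mul_of_nonneg_left h4 (abs_nonneg _)
        _ = lam * |u| * Real.exp |u| := by rw [h3]
    calc |u * (Real.exp (-lam * u) - 1)| = |u| * |Real.exp (-lam * u) - 1| := h1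
      _ ≤ |u| * (lam * |u| * Real.exp |u|) := mul_le_mul_of_nonneg_left h9 h8
      _ = lam * (|u| * |u| * Real.exp |u|) := by ring
      _ ≤ lam * (Real.exp |u| * Real.exp |u| * Real.exp |u|) := by
          apply mul_le_mul_of_nonneg_left _ hlam0.le
          have := mul_le_mul h5 h5 h8 h7.le
          nlinarith
      _ = lam * Real.exp |u| ^ 3 := by ring
      _ ≤ lam * D x := mul_le_mul_of_nonneg_left h6 hlam0.le
  -- tilted mean
  set mt : ℝ := m1 / M (-lam) with hmt_def
  have hmtB : |mt| ≤ lam * B := by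
    rw [hmt_def, abs_div, abs_of_pos hMpos]
    exact (div_le_self (abs_nonneg _) hM1).trans hm1B
  have hmtB' : |mt| ≤ B := hmtB.trans (by nlinarith)
  have hmt2 : mt ^ 2 ≤ B ^ 2 := by nlinarith [abs_nonneg mt, sq_abs mt, le_abs_self mt, neg_abs_le mt]
  -- further per-coordinate integrable functions
  have hi_qe : Integrable (fun x => (ω 0 x - mt) * Real.exp (-lam * ω 0 x)) μ := by
    refine (hi_ue.sub (hi_e.const_mul mt)).congr (Filter.Eventually.of_forall fun x => ?_)
    simp only [Pi.sub_apply]; ring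
  have hi_re : Integrable (fun x => (ω 0 x - mt) ^ 2 * Real.exp (-lam * ω 0 x)) μ := by
    refine ((hi_u2e.sub (hi_ue.const_mul (2 * mt))).add
      (hi_e.const_mul (mt ^ 2))).congr (Filter.Eventually.of_forall fun x => ?_)
    simp only [Pi.sub_apply, Pi.add_apply]; ring
  -- per-coordinate integral values
  have hval_q : ∫ x, (ω 0 x - mt) * Real.exp (-lam * ω 0 x) ∂μ = 0 := by
    rw [show (fun x => (ω 0 x - mt) * Real.exp (-lam * ω 0 x))
        = fun x => ω 0 x * Real.exp (-lam * ω 0 x) - mt * Real.exp (-lam * ω 0 x)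
        from funext fun x => by ring,
      integral_sub hi_ue (hi_e.const_mul mt), integral_const_mul, ← hMlam, ← hm1_def, hmt_def]
    field_simp
    ring
  set V : ℝ := ∫ x, (ω 0 x - mt) ^ 2 * Real.exp (-lam * ω 0 x) ∂μ with hV_def
  have hVnn : 0 ≤ V := integral_nonneg fun x => by positivity
  have hVB : V ≤ (2 + 2 * mt ^ 2) * B := by
    rw [hV_def, show (2 + 2 * mt ^ 2) * B = ∫ x, (2 + 2 * mt ^ 2) * D x ∂μ by rw [integral_const_mul]]
    refine integral_mono hi_re (hDint.const_mul _) fun x => ?_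
    set u := ω 0 x with hu
    have h1 : (u - mt) ^ 2 ≤ 2 * u ^ 2 + 2 * mt ^ 2 := by nlinarith [sq_nonneg (u + mt)]
    have h2 : u ^ 2 ≤ Real.exp |u| ^ 2 := by nlinarith [habs u, abs_nonneg u, sq_abs u]
    have h3 := h_e_le u; have h4 := hexp3 x; have h5 := Real.exp_pos |u|
    have hED : Real.exp |u| ≤ D x := le_trans (hE1cube u) h4
    calc (u - mt) ^ 2 * Real.exp (-lam * u)
        ≤ (2 * u ^ 2 + 2 * mt ^ 2) * Real.exp |u| :=
          mul_le_mul h1 h3 (Real.exp_pos _).le (by positivity)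
      _ ≤ (2 * Real.exp |u| ^ 2 + 2 * mt ^ 2) * Real.exp |u| := by nlinarith
      _ = 2 * Real.exp |u| ^ 3 + 2 * mt ^ 2 * Real.exp |u| := by ring
      _ ≤ 2 * D x + 2 * mt ^ 2 * D x := by nlinarith [hE2cube u, hE1cube u]
      _ = (2 + 2 * mt ^ 2) * D x := by ring
  -- the product family
  set G : ℕ → ℕ → ℕ → ℝ → ℝ := fun i j k u =>
    (if k = i then u - mt else 1) * (if k = j then u - mt else 1) * Real.exp (-lam * u)
    with hG_def
  have hite_meas : ∀ (c : Prop) (inst : Decidable c),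
      Measurable (fun u : ℝ => @ite _ c inst (u - mt) 1) := by
    intro c inst
    by_cases h : c <;> simp only [h, if_true, if_false, ite_true, ite_false] <;> fun_prop
  have hGmeas : ∀ i j k, Measurable (G i j k) := by
    intro i j k
    simp only [hG_def]
    exact ((hite_meas _ _).mul (hite_meas _ _)).mul (by fun_prop)
  have hGint0 : ∀ i j k, Integrable (fun x => G i j k (ω 0 x)) μ := by
    intro i j k
    simp only [hG_def]
    rcases eq_or_ne k i with hki | hki
    · subst hki
      rcases eq_or_ne k j with hkj | hkj
      · subst hkj
        simp only [eq_self_iff_true, ite_true]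
        exact hi_re.congr (Filter.Eventually.of_forall fun x => by ring)
      · simp only [eq_self_iff_true, ite_true, if_neg hkj]
        exact hi_qe.congr (Filter.Eventually.of_forall fun x => by ring)
    · rcases eq_or_ne k j with hkj | hkj
      · subst hkj
        simp only [eq_self_iff_true, ite_true, if_neg hki]
        exact hi_qe.congr (Filter.Eventually.of_forall fun x => by ring)
      · simp only [if_neg hki, if_neg hkj]
        exact hi_e.congr (Filter.Eventually.of_forall fun x => by ring)
  have hident' : ∀ i j k, IdentDistrib (fun x => G i j k (ω k x)) (fun x => G i j k (ω 0 x)) μ μ :=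
    fun i j k => (hident k).comp (hGmeas i j k)
  have hGintk : ∀ i j k, Integrable (fun x => G i j k (ω k x)) μ :=
    fun i j k => (hident' i j k).integrable_iff.2 (hGint0 i j k)
  have hGintval : ∀ i j k, ∫ x, G i j k (ω k x) ∂μ = ∫ x, G i j k (ω 0 x) ∂μ :=
    fun i j k => (hident' i j k).integral_eq
  -- the key expansion of each (i,j) term
  have hP : ∀ i ∈ Finset.range N, ∀ j ∈ Finset.range N,
      Integrable (fun x => ∏ k ∈ Finset.range N, G i j k (ω k x)) μ ∧
      ∫ x, ∏ k ∈ Finset.range N, G i j k (ω k x) ∂μ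
        = if i = j then V * M (-lam) ^ (N - 1) else 0 := by
    intro i hi j hj
    have hYindep : iIndepFun
        (fun k x => G i j k (ω k x)) μ := hindep.comp (fun k => G i j k) (hGmeas i j)
    have base := stmt19_indep_prod hYindep
      (fun k => (hGmeas i j k).comp (hmeas k)) (fun k => hGintk i j k) (Finset.range N)
    refine ⟨base.1, ?_⟩
    rw [show (∫ x, ∏ k ∈ Finset.range N, G i j k (ω k x) ∂μ)
        = ∏ k ∈ Finset.range N, ∫ x, G i j k (ω k x) ∂μ from base.2]
    by_cases hij : i = j
    · subst hij
      rw [if_pos rfl, ← Finset.mul_prod_erase _ _ hi]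
      have herase : ∀ k ∈ (Finset.range N).erase i,
          ∫ x, G i i k (ω k x) ∂μ = M (-lam) := by
        intro k hk
        have hki : k ≠ i := (Finset.mem_erase.1 hk).1
        rw [hGintval]
        simp only [hG_def, if_neg hki]
        rw [hMlam]
        exact integral_congr_ae (Filter.Eventually.of_forall fun x => by ring)
      rw [Finset.prod_congr rfl herase, Finset.prod_const,
        Finset.card_erase_of_mem hi, Finset.card_range]
      have hfi : ∫ x, G i i i (ω i x) ∂μ = V := by
        rw [hGintval]
        simp only [hG_def, eq_self_iff_true, ite_true]
        rw [hV_def]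
        exact integral_congr_ae (Filter.Eventually.of_forall fun x => by ring)
      rw [hfi]
    · rw [if_neg hij]
      refine Finset.prod_eq_zero hi ?_
      rw [hGintval]
      simp only [hG_def, eq_self_iff_true, ite_true, if_neg hij]
      rw [← hval_q]
      exact integral_congr_ae (Filter.Eventually.of_forall fun x => by ring)
  -- sums of products
  have hsum_int : Integrable
      (fun x => ∑ i ∈ Finset.range N, ∑ j ∈ Finset.range N,
        ∏ k ∈ Finset.range N, G i j k (ω k x)) μ :=
    integrable_finset_sum _ fun i hi => integrable_finset_sum _ fun j hj => (hP i hi j hj).1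
  have hsum_val : ∫ x, ∑ i ∈ Finset.range N, ∑ j ∈ Finset.range N,
        ∏ k ∈ Finset.range N, G i j k (ω k x) ∂μ
      = N * (V * M (-lam) ^ (N - 1)) := by
    rw [integral_finset_sum _ fun i hi => integrable_finset_sum _ fun j hj => (hP i hi j hj).1]
    have hrow : ∀ i ∈ Finset.range N,
        ∫ x, ∑ j ∈ Finset.range N, ∏ k ∈ Finset.range N, G i j k (ω k x) ∂μ
          = V * M (-lam) ^ (N - 1) := by
      intro i hi
      rw [integral_finset_sum _ fun j hj => (hP i hi j hj).1,
        Finset.sum_congr rfl fun j hj => (hP i hi j hj).2,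
        Finset.sum_ite_eq (Finset.range N) i fun _ => V * M (-lam) ^ (N - 1), if_pos hi]
    rw [Finset.sum_congr rfl hrow, Finset.sum_const, Finset.card_range, nsmul_eq_mul]
  -- pointwise expansion
  have hprodG : ∀ i ∈ Finset.range N, ∀ j ∈ Finset.range N, ∀ x : Ω,
      ∏ k ∈ Finset.range N, G i j k (ω k x)
        = (ω i x - mt) * ((ω j x - mt) *
            Real.exp (-lam * ∑ k ∈ Finset.range N, ω k x)) := by
    intro i hi j hj x
    have hexp : Real.exp (-lam * ∑ k ∈ Finset.range N, ω k x)
        = ∏ k ∈ Finset.range N, Real.exp (-lam * ω k x) := by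
      rw [Finset.mul_sum, Real.exp_sum]
    simp only [hG_def]
    rw [Finset.prod_mul_distrib, Finset.prod_mul_distrib,
      Finset.prod_ite_eq' (Finset.range N) i (fun k => ω k x - mt), if_pos hi,
      Finset.prod_ite_eq' (Finset.range N) j (fun k => ω k x - mt), if_pos hj,
      hexp]
    ring
  have hSsub : ∀ x : Ω, ∑ i ∈ Finset.range N, (ω i x - mt)
      = (∑ i ∈ Finset.range N, ω i x) - N * mt := by
    intro x
    rw [Finset.sum_sub_distrib, Finset.sum_const, Finset.card_range, nsmul_eq_mul]
  have hMpow_ne : M (-lam) ^ N ≠ 0 := pow_ne_zero _ hMne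
  have hpt : ∀ x : Ω,
      (lam * ((∑ i ∈ Finset.range N, ω i x) - N * mt)) ^ 2 *
        (Real.exp (-lam * ∑ i ∈ Finset.range N, ω i x) / M (-lam) ^ N)
      = lam ^ 2 / M (-lam) ^ N *
        ∑ i ∈ Finset.range N, ∑ j ∈ Finset.range N,
          ∏ k ∈ Finset.range N, G i j k (ω k x) := by
    intro x
    rw [Finset.sum_congr rfl fun i hi => Finset.sum_congr rfl fun j hj => hprodG i hi j hj x]
    have hdouble : ∑ i ∈ Finset.range N, ∑ j ∈ Finset.range N,
        (ω i x - mt) * ((ω j x - mt) * Real.exp (-lam * ∑ k ∈ Finset.range N, ω k x))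
        = (∑ i ∈ Finset.range N, (ω i x - mt)) *
            ((∑ j ∈ Finset.range N, (ω j x - mt)) *
              Real.exp (-lam * ∑ k ∈ Finset.range N, ω k x)) := by
      conv_rhs => rw [Finset.sum_mul]
      refine Finset.sum_congr rfl fun i _ => ?_
      rw [Finset.sum_mul]
      exact (Finset.mul_sum _ _ _).symm
    rw [hdouble, hSsub x]
    field_simp
  have hZρ_int : Integrable (fun x =>
      (lam * ((∑ i ∈ Finset.range N, ω i x) - N * mt)) ^ 2 *
        (Real.exp (-lam * ∑ i ∈ Finset.range N, ω i x) / M (-lam) ^ N)) μ := by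
    rw [show (fun x =>
        (lam * ((∑ i ∈ Finset.range N, ω i x) - N * mt)) ^ 2 *
          (Real.exp (-lam * ∑ i ∈ Finset.range N, ω i x) / M (-lam) ^ N))
      = fun x => lam ^ 2 / M (-lam) ^ N *
          ∑ i ∈ Finset.range N, ∑ j ∈ Finset.range N,
            ∏ k ∈ Finset.range N, G i j k (ω k x) from funext hpt]
    exact hsum_int.const_mul _
  have hZρ_val : ∫ x,
      (lam * ((∑ i ∈ Finset.range N, ω i x) - N * mt)) ^ 2 *
        (Real.exp (-lam * ∑ i ∈ Finset.range N, ω i x) / M (-lam) ^ N) ∂μ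
      = δ ^ 2 * V / M (-lam) := by
    rw [show (fun x =>
        (lam * ((∑ i ∈ Finset.range N, ω i x) - N * mt)) ^ 2 *
          (Real.exp (-lam * ∑ i ∈ Finset.range N, ω i x) / M (-lam) ^ N))
      = fun x => lam ^ 2 / M (-lam) ^ N *
          ∑ i ∈ Finset.range N, ∑ j ∈ Finset.range N,
            ∏ k ∈ Finset.range N, G i j k (ω k x) from funext hpt]
    rw [integral_const_mul, hsum_val]
    have hpow : M (-lam) ^ N = M (-lam) ^ (N - 1) * M (-lam) := by
      rw [← pow_succ]; congr 1; omega
    have hMpow1_ne : M (-lam) ^ (N - 1) ≠ 0 := pow_ne_zero _ hMne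
    rw [hpow]
    rw [show lam ^ 2 / (M (-lam) ^ (N - 1) * M (-lam)) *
        (↑N * (V * M (-lam) ^ (N - 1))) = lam ^ 2 * ↑N * V / M (-lam) by
      field_simp]
    rw [hlamN]
  -- measurability
  have hSmeas : Measurable (fun x => ∑ i ∈ Finset.range N, ω i x) :=
    Finset.measurable_sum _ fun i _ => hmeas i
  have hZ2meas : Measurable (fun x =>
      ENNReal.ofReal ((lam * ((∑ i ∈ Finset.range N, ω i x) - N * mt)) ^ 2)) :=
    (((hSmeas.sub_const _).const_mul lam).pow_const 2).ennreal_ofReal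
  have hρmeas : Measurable (fun x => ENNReal.ofReal
      (Real.exp (-lam * ∑ i ∈ Finset.range N, ω i x) / M (-lam) ^ N)) :=
    (((hSmeas.const_mul (-lam)).exp).div_const _).ennreal_ofReal
  -- arithmetic with a, δ, C
  have hδC : δ * C < a := (lt_div_iff₀ hC0).1 hδa
  have hhalf : δ ^ 2 * B ≤ a / 2 := by
    have h2 : δ ^ 2 ≤ δ := by
      have h := mul_le_mul_of_nonneg_left hδ1.le hδ0.le
      rw [mul_one] at h
      calc δ ^ 2 = δ * δ := sq δ
        _ ≤ δ := h
    have h3 : δ ^ 2 * B ≤ δ * B := mul_le_mul_of_nonneg_right h2 hBnn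
    have h4 : δ * (2 * B) ≤ δ * C := mul_le_mul_of_nonneg_left
      (by linarith only [pow_nonneg hBnn 3, hBnn, hC_def]) hδ0.le
    have e : δ * (2 * B) = 2 * (δ * B) := by ring
    linarith only [h3, h4, hδC, e]
  have hmean : |lam * ↑N * mt| ≤ a / 2 := by
    rw [abs_mul, abs_mul, abs_of_pos hlam0, abs_of_pos hNpos]
    have h1 : lam * ↑N * |mt| ≤ lam * ↑N * (lam * B) :=
      mul_le_mul_of_nonneg_left hmtB (by positivity)
    have h2 : lam * ↑N * (lam * B) = lam ^ 2 * ↑N * B := by ring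
    rw [h2, hlamN] at h1
    linarith only [h1, hhalf]
  -- inclusion of events
  have hEsub : {x : Ω | Real.exp (lam * ∑ i ∈ Finset.range N, ω i x) * M (-lam) ^ N
        < Real.exp (-a)}
      ⊆ {x : Ω | ENNReal.ofReal ((a / 2) ^ 2)
          ≤ ENNReal.ofReal ((lam * ((∑ i ∈ Finset.range N, ω i x) - N * mt)) ^ 2)} := by
    intro x hx
    simp only [Set.mem_setOf_eq] at hx ⊢
    have hpow1 : (1:ℝ) ≤ M (-lam) ^ N := one_le_pow₀ hM1
    have h1 : Real.exp (lam * ∑ i ∈ Finset.range N, ω i x) < Real.exp (-a) :=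
      lt_of_le_of_lt (le_mul_of_one_le_right (Real.exp_pos _).le hpow1) hx
    have h2 : lam * ∑ i ∈ Finset.range N, ω i x < -a := Real.exp_lt_exp.1 h1
    have h4 : -(lam * ↑N * mt) ≤ a / 2 := le_trans (neg_le_abs _) hmean
    have h3 : lam * ((∑ i ∈ Finset.range N, ω i x) - ↑N * mt) < -(a / 2) := by
      have hexp : lam * ((∑ i ∈ Finset.range N, ω i x) - ↑N * mt)
          = lam * ∑ i ∈ Finset.range N, ω i x - lam * ↑N * mt := by ring
      rw [hexp]; linarith only [h2, h4]
    apply ENNReal.ofReal_le_ofReal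
    have hay : a / 2 ≤ |lam * ((∑ i ∈ Finset.range N, ω i x) - ↑N * mt)| := by
      rw [abs_of_neg (by linarith only [h3, ha0])]
      linarith only [h3]
    calc (a / 2) ^ 2 ≤ |lam * ((∑ i ∈ Finset.range N, ω i x) - ↑N * mt)| ^ 2 :=
          pow_le_pow_left₀ (by linarith only [ha0]) hay 2
      _ = (lam * ((∑ i ∈ Finset.range N, ω i x) - ↑N * mt)) ^ 2 := sq_abs _
  -- final bound
  have hfinal : δ ^ 2 * V / M (-lam) / ((a / 2) ^ 2) ≤ C * (δ / a) ^ 2 := by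
    rw [div_le_iff₀ (by positivity : (0:ℝ) < (a / 2) ^ 2)]
    rw [show C * (δ / a) ^ 2 * (a / 2) ^ 2 = C * δ ^ 2 / 4 by field_simp; ring]
    have hd : δ ^ 2 * V / M (-lam) ≤ δ ^ 2 * V :=
      div_le_self (mul_nonneg (sq_nonneg δ) hVnn) hM1
    have hVC : V ≤ C / 4 := by
      have h5 : mt ^ 2 * B ≤ B ^ 2 * B := mul_le_mul_of_nonneg_right hmt2 hBnn
      have e1 : B ^ 2 * B = B ^ 3 := by ring
      have e2 : (2 + 2 * mt ^ 2) * B = 2 * B + 2 * (mt ^ 2 * B) := by ring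
      linarith only [hVB, pow_nonneg hBnn 3, h5, e1, e2, hC_def, hBnn]
    have hdd : δ ^ 2 * V ≤ δ ^ 2 * (C / 4) := mul_le_mul_of_nonneg_left hVC (sq_nonneg δ)
    linarith only [hd, hdd]
  refine le_trans (measure_mono hEsub) ?_
  refine le_trans (meas_ge_le_lintegral_div hZ2meas.aemeasurable
    (by simp only [ne_eq, ENNReal.ofReal_eq_zero, not_le]; positivity)
    ENNReal.ofReal_ne_top) ?_
  have hlint : ∫⁻ x, ENNReal.ofReal
      ((lam * ((∑ i ∈ Finset.range N, ω i x) - N * mt)) ^ 2)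
      ∂(μ.withDensity (fun x => ENNReal.ofReal
        (Real.exp (-lam * ∑ i ∈ Finset.range N, ω i x) / M (-lam) ^ N)))
      = ENNReal.ofReal (δ ^ 2 * V / M (-lam)) := by
    rw [lintegral_withDensity_eq_lintegral_mul μ hρmeas hZ2meas]
    have heq : ((fun x => ENNReal.ofReal
        (Real.exp (-lam * ∑ i ∈ Finset.range N, ω i x) / M (-lam) ^ N)) *
        fun x => ENNReal.ofReal
          ((lam * ((∑ i ∈ Finset.range N, ω i x) - N * mt)) ^ 2))
        = fun x => ENNReal.ofReal
            ((lam * ((∑ i ∈ Finset.range N, ω i x) - N * mt)) ^ 2 *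
              (Real.exp (-lam * ∑ i ∈ Finset.range N, ω i x) / M (-lam) ^ N)) := by
      funext x
      rw [Pi.mul_apply, ← ENNReal.ofReal_mul (by positivity)]
      rw [mul_comm]
    rw [heq, ← ofReal_integral_eq_lintegral_ofReal hZρ_int
      (Filter.Eventually.of_forall fun x => by positivity), hZρ_val]
  rw [hlint]
  rw [← ENNReal.ofReal_div_of_pos (by positivity : (0:ℝ) < (a / 2) ^ 2)]
  exact ENNReal.ofReal_le_ofReal hfinal
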